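/- Let 0 < ε₀ < 1, ε₀ ≠ 1/2, 0 < q < 1, and define i(ε₀,ε₁) = H₂(p) − q H₂(ε₀) − (1−q) H₂(ε₁) with p = q(1−ε₀)+(1−q)ε₁ held fixed under the perturbation ε₀ → ε₀+δ, ε₁ → ε₁ + qδ/(1−q). Then for sufficiently small δ > 0, −2q[H₂'(ε₀)+H₂'(ε₁)]·δ ≤ i(ε₀+δ, ε₁+qδ/(1−q)) − i(ε₀,ε₁) ≤ −(1/2)·q[H₂'(ε₀)+H₂'(ε₁)]·δ, provided H₂'(ε₀)+H₂'(ε₁) > 0. -/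

import Mathlib

/-- Binary entropy function (in bits). -/
noncomputable def H2 (x : ℝ) : ℝ :=
  -(x * Real.logb 2 x) - ((1 - x) * Real.logb 2 (1 - x))

/-- Derivative of the binary entropy function: `H₂'(x) = log₂((1−x)/x)`. -/
noncomputable def H2' (x : ℝ) : ℝ := Real.logb 2 ((1 - x) / x)

/-- Mutual information `i(ε₀,ε₁) = H₂(p) − q H₂(ε₀) − (1−q) H₂(ε₁)` with
`p = q(1−ε₀)+(1−q)ε₁`. -/
noncomputable def iFun (q e0 e1 : ℝ) : ℝ :=
  H2 (q * (1 - e0) + (1 - q) * e1) - q * H2 e0 - (1 - q) * H2 e1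

lemma hasDerivAt_H2 {x : ℝ} (hx : 0 < x) (hx' : x < 1) :
    HasDerivAt H2 (H2' x) x := by
  have hx1 : (0:ℝ) < 1 - x := by linarith
  have h1 : HasDerivAt (fun y : ℝ => y * Real.log y) (Real.log x + 1) x :=
    Real.hasDerivAt_mul_log hx.ne'
  have hinner : HasDerivAt (fun y : ℝ => 1 - y) (-1) x := by
    simpa using (hasDerivAt_id x).const_sub 1
  have h2 : HasDerivAt (fun y : ℝ => (1 - y) * Real.log (1 - y))
      (-(Real.log (1 - x) + 1)) x := by
    have := (Real.hasDerivAt_mul_log hx1.ne').comp x hinner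
    simpa [mul_comm, Function.comp_def] using this
  have hEq : H2 = fun y : ℝ =>
      (-(y * Real.log y) - (1 - y) * Real.log (1 - y)) / Real.log 2 := by
    funext y
    simp [H2, Real.logb]
    ring
  rw [hEq]
  have h3 := (h1.neg.sub h2).div_const (Real.log 2)
  convert h3 using 1 <;> try rfl
  have hlog : H2' x = (Real.log (1 - x) - Real.log x) / Real.log 2 := by
    rw [H2', Real.logb, Real.log_div hx1.ne' hx.ne']
  rw [hlog]; ring

/-- first-order Taylor estimate for the change in mutual
information under the weight-preserving perturbation
`ε₀ → ε₀+δ`, `ε₁ → ε₁ + qδ/(1−q)`. -/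
theorem stmt_14 (q e0 e1 : ℝ) (hq : 0 < q) (hq1 : q < 1)
    (he0 : 0 < e0) (he0' : e0 < 1) (he0h : e0 ≠ 1/2)
    (he1 : 0 < e1) (he1' : e1 < 1)
    (hpos : 0 < H2' e0 + H2' e1) :
    ∃ δ0 > 0, ∀ δ : ℝ, 0 < δ → δ < δ0 →
      -2 * q * (H2' e0 + H2' e1) * δ ≤
          iFun q (e0 + δ) (e1 + q * δ / (1 - q)) - iFun q e0 e1 ∧
      iFun q (e0 + δ) (e1 + q * δ / (1 - q)) - iFun q e0 e1 ≤
          -(1/2) * q * (H2' e0 + H2' e1) * δ := by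
  set S := H2' e0 + H2' e1 with hS
  have hq1' : (0:ℝ) < 1 - q := by linarith
  set g : ℝ → ℝ := fun δ => iFun q (e0 + δ) (e1 + q * δ / (1 - q)) with hgdef
  -- the argument of the outer H2 is constant
  have hgEq : g = fun δ : ℝ =>
      H2 (q * (1 - e0) + (1 - q) * e1) - q * H2 (e0 + δ)
        - (1 - q) * H2 (e1 + q * δ / (1 - q)) := by
    funext δ
    have harg : q * (1 - (e0 + δ)) + (1 - q) * (e1 + q * δ / (1 - q))
        = q * (1 - e0) + (1 - q) * e1 := by
      field_simp
      ring
    simp only [hgdef, iFun, harg]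
  have hderiv : HasDerivAt g (-(q * S)) 0 := by
    rw [hgEq]
    have h0 : HasDerivAt (fun δ : ℝ => e0 + δ) 1 0 := by
      simpa using (hasDerivAt_id (0:ℝ)).const_add e0
    have h1 : HasDerivAt (fun δ : ℝ => e1 + q * δ / (1 - q)) (q / (1 - q)) 0 := by
      have : HasDerivAt (fun δ : ℝ => e1 + q / (1 - q) * δ) (q / (1 - q)) 0 := by
        simpa using ((hasDerivAt_id (0:ℝ)).const_mul (q / (1 - q))).const_add e1
      convert this using 2 with δ
      ring
    have hH0 : HasDerivAt (fun δ : ℝ => H2 (e0 + δ)) (H2' e0) 0 := by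
      have := (hasDerivAt_H2 (by linarith : (0:ℝ) < e0 + 0)
        (by linarith : e0 + 0 < 1)).comp 0 h0
      simpa [Function.comp_def] using this
    have hH1 : HasDerivAt (fun δ : ℝ => H2 (e1 + q * δ / (1 - q)))
        (H2' e1 * (q / (1 - q))) 0 := by
      have hx0 : (0:ℝ) < e1 + q * 0 / (1 - q) := by
        simpa using he1
      have hx1 : e1 + q * 0 / (1 - q) < 1 := by
        simpa using he1'
      have := (hasDerivAt_H2 hx0 hx1).comp 0 h1
      simpa [Function.comp_def] using this
    have := ((hasDerivAt_const (0:ℝ)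
        (H2 (q * (1 - e0) + (1 - q) * e1))).sub (hH0.const_mul q)).sub
        (hH1.const_mul (1 - q))
    convert this using 1 <;> try rfl
    field_simp
    ring
  have hqS : 0 < q * S := mul_pos hq hpos
  -- slope limit
  have hslope := hasDerivAt_iff_tendsto_slope.mp hderiv
  have hmem : Set.Ioo (-(2 * (q * S))) (-(q * S / 2)) ∈ nhds (-(q * S)) := by
    apply Ioo_mem_nhds <;> nlinarith
  have hev := hslope.eventually_mem hmem
  rw [eventually_nhdsWithin_iff, Metric.eventually_nhds_iff] at hev
  obtain ⟨δ0, hδ0, hball⟩ := hev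
  refine ⟨δ0, hδ0, fun δ hδ hδlt => ?_⟩
  have hb : slope g 0 δ ∈ Set.Ioo (-(2 * (q * S))) (-(q * S / 2)) := by
    apply hball (by simpa [abs_of_pos hδ] using hδlt) (by simp [hδ.ne'])
  have hslope_eq : slope g 0 δ = (g δ - g 0) / δ := by
    simp [slope_def_field]
  rw [hslope_eq] at hb
  have hg0 : g 0 = iFun q e0 e1 := by simp [hgdef]
  have hgδ : g δ = iFun q (e0 + δ) (e1 + q * δ / (1 - q)) := rfl
  obtain ⟨hb1, hb2⟩ := hb
  constructor
  · have := (div_lt_iff₀ hδ).mp hb2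
    nlinarith [(lt_div_iff₀ hδ).mp hb1]
  · nlinarith [(div_lt_iff₀ hδ).mp hb2]
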